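/- Fix u ≥ 1, sites a = (−u,−1), b = (u,1), and a fixed x with x > u. Let (p_n) be any sequence of nonzero reals converging to 0, and let (y_n) be a sequence of reals with −1 < y_n < 1 and |x+u|^{p_n} + |y_n+1|^{p_n} = |x−u|^{p_n} + |y_n−1|^{p_n} for every n. Then y_n converges to −u/x (the hyperbola point h(x) = −u/x). -/

import Mathlib

open Filter

private theorem stmt7_slope_lim (t : ℝ) (ht : 0 < t) (p : ℕ → ℝ) (hp0 : ∀ n, p n ≠ 0)
    (hp : Tendsto p atTop (nhds 0)) :
    Tendsto (fun n => (t ^ (p n) - 1) / p n) atTop (nhds (Real.log t)) := by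
  have hd : HasDerivAt (fun q : ℝ => t ^ q) (Real.log t) 0 := by
    have h1 : HasDerivAt (fun q : ℝ => q * Real.log t) (Real.log t) 0 := by
      simpa using (hasDerivAt_id (0:ℝ)).mul_const (Real.log t)
    have h2 := h1.exp
    rw [zero_mul, Real.exp_zero, one_mul] at h2
    exact h2.congr_of_eventuallyEq (Eventually.of_forall fun q => by
      simp [Real.rpow_def_of_pos ht, mul_comm])
  have hslope := hasDerivAt_iff_tendsto_slope.mp hd
  have hmem : Tendsto p atTop (nhdsWithin 0 {(0:ℝ)}ᶜ) :=
    tendsto_nhdsWithin_of_tendsto_nhds_of_eventually_within _ hp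
      (Eventually.of_forall fun n => hp0 n)
  refine (hslope.comp hmem).congr fun n => ?_
  simp [slope_def_field, Real.rpow_zero]

private theorem stmt7_mono {p : ℝ} (hp : p ≠ 0) {a b : ℝ} (ha : -1 < a) (hab : a < b)
    (hb : b < 1) :
    ((1 - b) ^ p - (1 + b) ^ p) / p < ((1 - a) ^ p - (1 + a) ^ p) / p := by
  have h1b : (0:ℝ) < 1 - b := by linarith
  have h1a : (0:ℝ) < 1 + a := by linarith
  rcases hp.lt_or_gt with h | h
  · rw [div_lt_div_right_of_neg h]
    have e1 : (1 - a) ^ p < (1 - b) ^ p :=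
      Real.rpow_lt_rpow_of_neg h1b (by linarith) h
    have e2 : (1 + b) ^ p < (1 + a) ^ p :=
      Real.rpow_lt_rpow_of_neg h1a (by linarith) h
    linarith
  · rw [div_lt_div_iff_of_pos_right h]
    have e1 : (1 - b) ^ p < (1 - a) ^ p :=
      Real.rpow_lt_rpow (le_of_lt h1b) (by linarith) h
    have e2 : (1 + a) ^ p < (1 + b) ^ p :=
      Real.rpow_lt_rpow (le_of_lt h1a) (by linarith) h
    linarith

/-- cell H₄: bisector points with `−1 < y < 1` over a fixed `x > u`
converge to the hyperbola point `h(x) = −u/x` as `p → 0`. -/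
theorem stmt7 (u x : ℝ) (hu : 1 ≤ u) (hx : u < x)
    (p : ℕ → ℝ) (hp0 : ∀ n, p n ≠ 0) (hp : Tendsto p atTop (nhds 0))
    (y : ℕ → ℝ) (hy1 : ∀ n, -1 < y n) (hy2 : ∀ n, y n < 1)
    (hbis : ∀ n, |x + u| ^ (p n) + |y n + 1| ^ (p n)
                 = |x - u| ^ (p n) + |y n - 1| ^ (p n)) :
    Tendsto y atTop (nhds (-u / x)) := by
  have hu0 : (0:ℝ) < u := lt_of_lt_of_le zero_lt_one hu
  have hx0 : (0:ℝ) < x := lt_trans hu0 hx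
  have hB : (0:ℝ) < x - u := sub_pos.mpr hx
  have hA : (0:ℝ) < x + u := by linarith
  set Y : ℝ := -u / x with hYdef
  have hY1 : -1 < Y := by
    rw [hYdef, neg_div, neg_lt_neg_iff, div_lt_one hx0]; exact hx
  have hY0 : Y < 0 := by
    rw [hYdef, neg_div, neg_lt_zero]; positivity
  have hY2 : Y < 1 := lt_trans hY0 zero_lt_one
  have h1mY : 1 - Y = (x + u) / x := by
    rw [hYdef, eq_div_iff (ne_of_gt hx0), sub_mul, neg_div, neg_mul, div_mul_cancel₀ _ (ne_of_gt hx0)]; ring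
  have h1pY : 1 + Y = (x - u) / x := by
    rw [hYdef, eq_div_iff (ne_of_gt hx0), add_mul, neg_div, neg_mul, div_mul_cancel₀ _ (ne_of_gt hx0)]; ring
  set L : ℝ := Real.log (x + u) - Real.log (x - u) with hLdef
  -- the bisector sequence, in divided form
  have hbis' : ∀ n, ((x + u) ^ p n - (x - u) ^ p n) / p n
      = ((1 - y n) ^ p n - (1 + y n) ^ p n) / p n := by
    intro n
    have h3 : |y n + 1| = 1 + y n := by
      rw [abs_of_pos (by linarith [hy1 n])]; ring
    have h4 : |y n - 1| = 1 - y n := by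
      rw [abs_of_neg (by linarith [hy2 n])]; ring
    have h := hbis n
    rw [abs_of_pos hA, abs_of_pos hB, h3, h4] at h
    have key : (x + u) ^ p n - (x - u) ^ p n
        = (1 - y n) ^ p n - (1 + y n) ^ p n := by linarith
    rw [key]
  -- limit of the left side
  have hc : Tendsto (fun n => ((x + u) ^ p n - (x - u) ^ p n) / p n) atTop (nhds L) := by
    have := (stmt7_slope_lim (x + u) hA p hp0 hp).sub (stmt7_slope_lim (x - u) hB p hp0 hp)
    refine this.congr fun n => ?_
    rw [div_sub_div_same]; ring_nf
  -- limit of the right side at a fixed point w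
  have hg : ∀ w : ℝ, -1 < w → w < 1 →
      Tendsto (fun n => ((1 - w) ^ p n - (1 + w) ^ p n) / p n) atTop
        (nhds (Real.log (1 - w) - Real.log (1 + w))) := by
    intro w hw1 hw2
    have := (stmt7_slope_lim (1 - w) (by linarith) p hp0 hp).sub
      (stmt7_slope_lim (1 + w) (by linarith) p hp0 hp)
    refine this.congr fun n => ?_
    rw [div_sub_div_same]; ring_nf
  have hLY : Real.log (1 - Y) - Real.log (1 + Y) = L := by
    rw [h1mY, h1pY, Real.log_div (by positivity) (ne_of_gt hx0),
      Real.log_div (by positivity) (ne_of_gt hx0), hLdef]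
    ring
  rw [Metric.tendsto_atTop]
  intro ε hε
  set ε' : ℝ := min ε (min ((1 + Y) / 2) ((1 - Y) / 2)) with hε'def
  have hε'0 : 0 < ε' := by
    refine lt_min hε (lt_min (by linarith) (by linarith))
  have hε'ε : ε' ≤ ε := min_le_left _ _
  have hε'a : ε' ≤ (1 + Y) / 2 := le_trans (min_le_right _ _) (min_le_left _ _)
  have hε'b : ε' ≤ (1 - Y) / 2 := le_trans (min_le_right _ _) (min_le_right _ _)
  set z : ℝ := Y + ε' with hzdef
  set w : ℝ := Y - ε' with hwdef
  have hz1 : -1 < z := by simp only [hzdef]; linarith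
  have hz2 : z < 1 := by simp only [hzdef]; linarith
  have hw1 : -1 < w := by simp only [hwdef]; linarith
  have hw2 : w < 1 := by simp only [hwdef]; linarith
  have hYz : Y < z := by simp only [hzdef]; linarith
  have hwY : w < Y := by simp only [hwdef]; linarith
  -- ℓ z < L and L < ℓ w
  have hlz : Real.log (1 - z) - Real.log (1 + z) < L := by
    rw [← hLY]
    have e1 : Real.log (1 - z) < Real.log (1 - Y) :=
      Real.log_lt_log (by linarith) (by linarith)
    have e2 : Real.log (1 + Y) < Real.log (1 + z) :=
      Real.log_lt_log (by linarith) (by linarith)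
    linarith
  have hlw : L < Real.log (1 - w) - Real.log (1 + w) := by
    rw [← hLY]
    have e1 : Real.log (1 - Y) < Real.log (1 - w) :=
      Real.log_lt_log (by linarith) (by linarith)
    have e2 : Real.log (1 + w) < Real.log (1 + Y) :=
      Real.log_lt_log (by linarith) (by linarith)
    linarith
  -- eventual upper bound
  have hub : ∀ᶠ n in atTop, y n < z := by
    have hsub : Tendsto (fun n => ((x + u) ^ p n - (x - u) ^ p n) / p n
        - ((1 - z) ^ p n - (1 + z) ^ p n) / p n) atTop
        (nhds (L - (Real.log (1 - z) - Real.log (1 + z)))) := hc.sub (hg z hz1 hz2)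
    filter_upwards [hsub.eventually_const_lt (by linarith : (0:ℝ) < L - _)] with n hn
    by_contra hcon
    push_neg at hcon
    rcases eq_or_lt_of_le hcon with he | hlt
    · rw [hbis' n, ← he] at hn; linarith
    · have := stmt7_mono (hp0 n) hz1 hlt (hy2 n)
      rw [hbis' n] at hn; linarith
  -- eventual lower bound
  have hlb : ∀ᶠ n in atTop, w < y n := by
    have hsub : Tendsto (fun n => ((1 - w) ^ p n - (1 + w) ^ p n) / p n
        - ((x + u) ^ p n - (x - u) ^ p n) / p n) atTop
        (nhds ((Real.log (1 - w) - Real.log (1 + w)) - L)) := (hg w hw1 hw2).sub hc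
    filter_upwards [hsub.eventually_const_lt (by linarith : (0:ℝ) < _ - L)] with n hn
    by_contra hcon
    push_neg at hcon
    rcases eq_or_lt_of_le hcon with he | hlt
    · rw [hbis' n, he] at hn; linarith
    · have := stmt7_mono (hp0 n) (hy1 n) hlt hw2
      rw [hbis' n] at hn; linarith
  rcases eventually_atTop.mp (hub.and hlb) with ⟨N, hN⟩
  refine ⟨N, fun n hn => ?_⟩
  rcases hN n hn with ⟨h1, h2⟩
  rw [Real.dist_eq]
  have : |y n - Y| < ε' := abs_lt.mpr ⟨by simp only [hwdef] at h2; linarith,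
    by simp only [hzdef] at h1; linarith⟩
  exact lt_of_lt_of_le this hε'ε
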